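/- arXiv:1509.06505 — 2 statements merged into one kernel-verified Lean document; each statement's English description precedes it below -/
import Mathlib

section
/- Let σ be a permutation of {1,...,n} with k cycles, and let M be an n×n Haar-distributed random orthogonal matrix with a, b fixed indices. Writing X_n = √n Σ_i M_{a,i} M_{b,σ(i)} and Y_n = √n (M C_n Mᵀ)_{ab} where C_n is an n-cycle with a compatible labeling, then E[(X_n − Y_n)²] ≤ 4k²·C/n for some absolute constant C and all sufficiently large n. -/
open MeasureTheory Matrix

/-- Matrices are measurable as functions to functions (pi measurable structure). -/
instance matrixMeasurableSpace (n : ℕ) : MeasurableSpace (Matrix (Fin n) (Fin n) ℝ) :=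
  inferInstanceAs (MeasurableSpace ((Fin n) → (Fin n) → ℝ))

/-- `μ` is the Haar probability measure on the orthogonal group `O(n)`, viewed as a
measure on `n × n` real matrices: it is a probability measure concentrated on
orthogonal matrices which is invariant under left and right translation by
orthogonal matrices. -/
structure IsHaarOrthogonal (n : ℕ) (μ : Measure (Matrix (Fin n) (Fin n) ℝ)) : Prop where
  isProb : IsProbabilityMeasure μ
  ae_orth : ∀ᵐ M ∂μ, M * Mᵀ = 1
  left_inv : ∀ V : Matrix (Fin n) (Fin n) ℝ, V * Vᵀ = 1 → μ.map (fun M => V * M) = μ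
  right_inv : ∀ V : Matrix (Fin n) (Fin n) ℝ, V * Vᵀ = 1 → μ.map (fun M => M * V) = μ

/-- The number of cycles of a permutation, counting fixed points as cycles. -/
def cycleCount {n : ℕ} (σ : Equiv.Perm (Fin n)) : ℕ :=
  σ.cycleType.card + (Finset.univ.filter fun x => σ x = x).card

open Equiv List

section Comb

variable {α : Type*} [DecidableEq α]

lemma formPerm_middle (A B : List α) (x y : α) (h : List.Nodup (A ++ x :: y :: B)) :
    List.formPerm (A ++ x :: y :: B) x = y := by
  have hi : A.length + 1 < (A ++ x :: y :: B).length := by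
    simp [List.length_append]
  have h1 : (A ++ x :: y :: B)[A.length]'(by omega) = x := by
    rw [List.getElem_append_right (le_refl _)]
    simp
  have h2 : (A ++ x :: y :: B)[A.length + 1]'hi = y := by
    rw [List.getElem_append_right (by omega)]
    simp
  have := List.formPerm_apply_lt_getElem (A ++ x :: y :: B) h A.length hi
  rwa [h1, h2] at this

end Comb

section CC

open scoped Classical

variable {n : ℕ} (σ : Equiv.Perm (Fin n))

noncomputable def reps : Finset (Fin n) :=
  Finset.univ.filter fun x => ∀ y, σ.SameCycle x y → x ≤ y

noncomputable def blockOf (x : Fin n) : List (Fin n) :=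
  if σ x = x then [x] else σ.toList x

noncomputable def blocks : List (List (Fin n)) :=
  ((reps σ).sort (· ≤ ·)).map (blockOf σ)

noncomputable def bigList : List (Fin n) := (blocks σ).flatten

lemma mem_blockOf {x y : Fin n} : y ∈ blockOf σ x ↔ σ.SameCycle x y := by
  unfold blockOf
  split_ifs with hx
  · simp only [List.mem_singleton]
    constructor
    · rintro rfl; exact Equiv.Perm.SameCycle.refl _ _
    · intro h; exact (h.eq_of_left hx).symm
  · rw [Equiv.Perm.mem_toList_iff]
    simp [Equiv.Perm.mem_support, hx]

lemma blockOf_nodup (x : Fin n) : (blockOf σ x).Nodup := by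
  unfold blockOf
  split_ifs
  · simp
  · exact Equiv.Perm.nodup_toList σ x

lemma blockOf_chain {x z w : Fin n} {l₁ l₂ : List (Fin n)}
    (h : blockOf σ x = l₁ ++ z :: w :: l₂) : w = σ z := by
  unfold blockOf at h
  split_ifs at h with hx
  · apply_fun List.length at h
    simp [List.length_append] at h
    omega
  · have hlen : l₁.length + 1 < (σ.toList x).length := by
      rw [h]; simp [List.length_append]
    have h1 : (σ.toList x)[l₁.length]'(by omega) = z := by
      rw [List.getElem_of_eq h, List.getElem_append_right (le_refl _)]; simp
    have h2 : (σ.toList x)[l₁.length + 1]'hlen = w := by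
      rw [List.getElem_of_eq h, List.getElem_append_right
        (by omega : l₁.length ≤ l₁.length + 1)]; simp
    have g1 := Equiv.Perm.getElem_toList σ x l₁.length (by omega)
    have g2 := Equiv.Perm.getElem_toList σ x (l₁.length + 1) hlen
    rw [h1] at g1
    rw [h2] at g2
    rw [g2, g1, pow_succ', Equiv.Perm.mul_apply]

lemma exists_rep (x : Fin n) : ∃ r ∈ reps σ, σ.SameCycle r x := by
  have hx : x ∈ Finset.univ.filter fun y => σ.SameCycle x y := by
    simp [Equiv.Perm.SameCycle.refl]
  have hne : (Finset.univ.filter fun y => σ.SameCycle x y).Nonempty := ⟨x, hx⟩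
  have hm : σ.SameCycle x ((Finset.univ.filter fun y => σ.SameCycle x y).min' hne) :=
    (Finset.mem_filter.1 (Finset.min'_mem _ hne)).2
  refine ⟨_, ?_, hm.symm⟩
  rw [reps, Finset.mem_filter]
  refine ⟨Finset.mem_univ _, fun y hy => ?_⟩
  apply Finset.min'_le
  rw [Finset.mem_filter]
  exact ⟨Finset.mem_univ _, hm.trans hy⟩

lemma rep_unique {r r' : Fin n} (hr : r ∈ reps σ) (hr' : r' ∈ reps σ)
    (h : σ.SameCycle r r') : r = r' := by
  rw [reps, Finset.mem_filter] at hr hr'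
  exact le_antisymm (hr.2 r' h) (hr'.2 r h.symm)

lemma mem_bigList (y : Fin n) : y ∈ bigList σ := by
  obtain ⟨r, hr, hry⟩ := exists_rep σ y
  rw [bigList, List.mem_flatten]
  refine ⟨blockOf σ r, ?_, (mem_blockOf σ).2 hry⟩
  rw [blocks]
  exact List.mem_map_of_mem ((Finset.mem_sort _).2 hr)

lemma bigList_nodup : (bigList σ).Nodup := by
  rw [bigList, List.nodup_flatten]
  constructor
  · intro b hb
    rw [blocks] at hb
    obtain ⟨r, _, rfl⟩ := List.mem_map.1 hb
    exact blockOf_nodup σ r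
  · rw [blocks, List.pairwise_map]
    have hnd : ((reps σ).sort (· ≤ ·)).Pairwise (· ≠ ·) :=
      (Finset.sort_nodup _ _)
    refine hnd.imp_of_mem ?_
    intro r r' hr hr' hne z hz hz'
    rw [mem_blockOf] at hz hz'
    exact hne (rep_unique σ ((Finset.mem_sort _).1 hr) ((Finset.mem_sort _).1 hr')
      (hz.trans hz'.symm))

lemma bigList_toFinset : (bigList σ).toFinset = Finset.univ := by
  apply Finset.eq_univ_of_forall
  intro x
  rw [List.mem_toFinset]
  exact mem_bigList σ x

lemma bigList_length (hn : 2 ≤ n) : 2 ≤ (bigList σ).length := by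
  have h1 : ((bigList σ).toFinset).card ≤ (bigList σ).length := List.toFinset_card_le _
  rw [bigList_toFinset, Finset.card_univ, Fintype.card_fin] at h1
  omega

noncomputable def closeCycle : Equiv.Perm (Fin n) := List.formPerm (bigList σ)

lemma closeCycle_cycleType (hn : 2 ≤ n) : (closeCycle σ).cycleType = {n} := by
  have hc : (closeCycle σ).IsCycle :=
    List.isCycle_formPerm (bigList_nodup σ) (bigList_length σ hn)
  have hs : (closeCycle σ).support = Finset.univ := by
    rw [closeCycle, List.support_formPerm_of_nodup _ (bigList_nodup σ)]
    · exact bigList_toFinset σ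
    · intro x hx
      have := bigList_length σ hn
      rw [hx] at this
      simp at this
  rw [hc.cycleType, hs, Finset.card_univ, Fintype.card_fin]

lemma reps_card_le : (reps σ).card ≤ cycleCount σ := by
  have hsplit := Finset.card_filter_add_card_filter_not
    (s := reps σ) (p := fun x => σ x = x)
  have h1 : ((reps σ).filter fun x => σ x = x).card ≤
      (Finset.univ.filter fun x => σ x = x).card := by
    apply Finset.card_le_card
    intro x hx
    rw [Finset.mem_filter] at hx ⊢
    exact ⟨Finset.mem_univ _, hx.2⟩
  have h2 : ((reps σ).filter fun x => ¬ σ x = x).card ≤ σ.cycleType.card := by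
    have hcard : σ.cycleType.card = σ.cycleFactorsFinset.card := by
      rw [Equiv.Perm.cycleType_def, Multiset.card_map]
      rfl
    rw [hcard]
    apply Finset.card_le_card_of_injOn σ.cycleOf
    · intro x hx
      rw [Finset.mem_coe, Finset.mem_filter] at hx
      exact Finset.mem_coe.2
        (Equiv.Perm.cycleOf_mem_cycleFactorsFinset_iff.2 (Equiv.Perm.mem_support.2 hx.2))
    · intro x hx y hy hxy
      simp only [Finset.coe_filter, Set.mem_setOf_eq] at hx hy
      have hx' : x ∈ (σ.cycleOf x).support :=
        Equiv.Perm.mem_support_cycleOf_iff.2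
          ⟨Equiv.Perm.SameCycle.refl _ _, Equiv.Perm.mem_support.2 hx.2⟩
      rw [hxy] at hx'
      have hsc : σ.SameCycle y x := (Equiv.Perm.mem_support_cycleOf_iff.1 hx').1
      exact (rep_unique σ hy.1 hx.1 hsc).symm
  unfold cycleCount
  omega

lemma closeCycle_diff_le :
    (Finset.univ.filter fun i => σ i ≠ closeCycle σ i).card ≤ cycleCount σ := by
  have hsub : (Finset.univ.filter fun i => σ i ≠ closeCycle σ i) ⊆
      (((reps σ).sort (· ≤ ·)).map fun r => (blockOf σ r).getLastD r).toFinset := by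
    intro x hx
    have hbad : σ x ≠ closeCycle σ x := (Finset.mem_filter.1 hx).2
    obtain ⟨b, hbmem, hxb⟩ := List.mem_flatten.1 (mem_bigList σ x)
    obtain ⟨r, hrs, rfl⟩ := List.mem_map.1 (by rw [blocks] at hbmem; exact hbmem)
    obtain ⟨l₁, l₂, hb⟩ := List.append_of_mem hxb
    match l₂, hb with
    | [], hb =>
      rw [List.mem_toFinset]
      apply List.mem_map.2
      refine ⟨r, hrs, ?_⟩
      rw [hb]
      exact List.getLastD_concat
    | w :: l₂', hb =>
      exfalso
      have hw : w = σ x := blockOf_chain σ hb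
      obtain ⟨B₁, B₂, hB⟩ := List.append_of_mem hbmem
      have hbig : bigList σ = (B₁.flatten ++ l₁) ++ x :: w :: (l₂' ++ B₂.flatten) := by
        rw [bigList, hB, List.flatten_append, List.flatten_cons, hb]
        simp [List.append_assoc]
      have hnd : ((B₁.flatten ++ l₁) ++ x :: w :: (l₂' ++ B₂.flatten)).Nodup := by
        rw [← hbig]; exact bigList_nodup σ
      have : closeCycle σ x = w := by
        rw [closeCycle, hbig]
        exact formPerm_middle _ _ _ _ hnd
      rw [this, hw] at hbad
      exact hbad rfl
  calc (Finset.univ.filter fun i => σ i ≠ closeCycle σ i).card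
      ≤ (((reps σ).sort (· ≤ ·)).map fun r => (blockOf σ r).getLastD r).toFinset.card :=
        Finset.card_le_card hsub
    _ ≤ (((reps σ).sort (· ≤ ·)).map fun r => (blockOf σ r).getLastD r).length :=
        List.toFinset_card_le _
    _ = (reps σ).card := by rw [List.length_map, Finset.length_sort]
    _ ≤ cycleCount σ := reps_card_le σ

end CC


namespace Stmt9Aux

variable {n : ℕ} {μ : Measure (Matrix (Fin n) (Fin n) ℝ)}

lemma measurable_entry (a i : Fin n) :
    Measurable (fun M : Matrix (Fin n) (Fin n) ℝ => M a i) :=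
  (measurable_pi_apply i).comp (measurable_pi_apply a)

lemma ae_sums (h : IsHaarOrthogonal n μ) :
    ∀ᵐ M ∂μ, (∀ x : Fin n, ∑ y, (M x y)^2 = 1) ∧ (∀ y : Fin n, ∑ x, (M x y)^2 = 1) := by
  filter_upwards [h.ae_orth] with M hM
  have hM' : Mᵀ * M = 1 := mul_eq_one_comm.mp hM
  constructor
  · intro x
    have := congrFun (congrFun hM x) x
    simpa [Matrix.mul_apply, Matrix.one_apply, pow_two] using this
  · intro y
    have := congrFun (congrFun hM' y) y
    simpa [Matrix.mul_apply, Matrix.one_apply, pow_two] using this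

lemma sq_le_one_of_sum {f : Fin n → ℝ} {y : Fin n} (hf : ∑ x, (f x)^2 = 1) :
    (f y)^2 ≤ 1 := by
  rw [← hf]
  exact Finset.single_le_sum (fun i _ => sq_nonneg (f i)) (Finset.mem_univ y)

lemma ae_entry_sq (h : IsHaarOrthogonal n μ) :
    ∀ᵐ M ∂μ, ∀ x y : Fin n, (M x y)^2 ≤ 1 := by
  filter_upwards [ae_sums h] with M hM x y
  exact sq_le_one_of_sum (hM.1 x)

lemma integrable_of_bdd (h : IsHaarOrthogonal n μ)
    {f : Matrix (Fin n) (Fin n) ℝ → ℝ} (hf : Measurable f) {B : ℝ}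
    (hB : ∀ᵐ M ∂μ, |f M| ≤ B) : Integrable f μ := by
  haveI := h.isProb
  exact (integrable_const B).mono' hf.aestronglyMeasurable
    (by filter_upwards [hB] with M hM; rwa [Real.norm_eq_abs])

lemma integral_comp_right (h : IsHaarOrthogonal n μ)
    {V : Matrix (Fin n) (Fin n) ℝ} (hV : V * Vᵀ = 1)
    {f : Matrix (Fin n) (Fin n) ℝ → ℝ} (hf : Measurable f) :
    ∫ M, f (M * V) ∂μ = ∫ M, f M ∂μ := by
  have hg : Measurable fun M : Matrix (Fin n) (Fin n) ℝ => M * V := by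
    apply measurable_pi_lambda
    intro x
    apply measurable_pi_lambda
    intro y
    simp only [Matrix.mul_apply]
    exact Finset.measurable_sum _ fun k _ => (measurable_entry x k).mul_const _
  conv_rhs => rw [← h.right_inv V hV]
  rw [integral_map hg.aemeasurable hf.aestronglyMeasurable]

lemma integral_comp_left (h : IsHaarOrthogonal n μ)
    {V : Matrix (Fin n) (Fin n) ℝ} (hV : V * Vᵀ = 1)
    {f : Matrix (Fin n) (Fin n) ℝ → ℝ} (hf : Measurable f) :
    ∫ M, f (V * M) ∂μ = ∫ M, f M ∂μ := by
  have hg : Measurable fun M : Matrix (Fin n) (Fin n) ℝ => V * M := by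
    apply measurable_pi_lambda
    intro x
    apply measurable_pi_lambda
    intro y
    simp only [Matrix.mul_apply]
    exact Finset.measurable_sum _ fun k _ => (measurable_entry k y).const_mul _
  conv_rhs => rw [← h.left_inv V hV]
  rw [integral_map hg.aemeasurable hf.aestronglyMeasurable]

lemma permMatrix_orth (τ : Equiv.Perm (Fin n)) :
    (τ.toPEquiv.toMatrix : Matrix (Fin n) (Fin n) ℝ) * (τ.toPEquiv.toMatrix)ᵀ = 1 := by
  rw [← PEquiv.toMatrix_symm, ← PEquiv.toMatrix_trans, ← Equiv.toPEquiv_symm,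
    ← Equiv.toPEquiv_trans]
  simp

lemma integral_rowPerm (h : IsHaarOrthogonal n μ) (τ : Equiv.Perm (Fin n))
    {f : Matrix (Fin n) (Fin n) ℝ → ℝ} (hf : Measurable f) :
    ∫ M, f (fun x y => M (τ x) y) ∂μ = ∫ M, f M ∂μ := by
  have key : ∀ M : Matrix (Fin n) (Fin n) ℝ,
      (τ.toPEquiv.toMatrix : Matrix (Fin n) (Fin n) ℝ) * M = fun x y => M (τ x) y := by
    intro M
    rw [PEquiv.toMatrix_toPEquiv_mul]
    funext x y
    simp [Matrix.submatrix_apply]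
  have := integral_comp_left h (permMatrix_orth τ) hf
  simp only [key] at this
  exact this

lemma integral_colPerm (h : IsHaarOrthogonal n μ) (τ : Equiv.Perm (Fin n))
    {f : Matrix (Fin n) (Fin n) ℝ → ℝ} (hf : Measurable f) :
    ∫ M, f (fun x y => M x (τ y)) ∂μ = ∫ M, f M ∂μ := by
  have key : ∀ M : Matrix (Fin n) (Fin n) ℝ,
      M * (τ.symm.toPEquiv.toMatrix : Matrix (Fin n) (Fin n) ℝ) = fun x y => M x (τ y) := by
    intro M
    rw [PEquiv.mul_toMatrix_toPEquiv]
    funext x y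
    simp [Matrix.submatrix_apply]
  have := integral_comp_right h (permMatrix_orth τ.symm) hf
  simp only [key] at this
  exact this

lemma integral_signFlip (h : IsHaarOrthogonal n μ) (v : Fin n)
    {f : Matrix (Fin n) (Fin n) ℝ → ℝ} (hf : Measurable f) :
    ∫ M, f (fun x y => M x y * (if y = v then -1 else 1)) ∂μ = ∫ M, f M ∂μ := by
  have hV : (Matrix.diagonal fun y : Fin n => if y = v then (-1:ℝ) else 1) *
      (Matrix.diagonal fun y : Fin n => if y = v then (-1:ℝ) else 1)ᵀ = 1 := by
    rw [Matrix.diagonal_transpose, Matrix.diagonal_mul_diagonal]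
    convert Matrix.diagonal_one using 2
    funext i
    split_ifs <;> norm_num
  have key : ∀ M : Matrix (Fin n) (Fin n) ℝ,
      M * (Matrix.diagonal fun y : Fin n => if y = v then (-1:ℝ) else 1) =
        fun x y => M x y * (if y = v then -1 else 1) := by
    intro M
    funext x y
    rw [Matrix.mul_diagonal]
  have := integral_comp_right h hV hf
  simp only [key] at this
  exact this

lemma sum_two {f : Fin n → ℝ} (u v : Fin n) (huv : u ≠ v)
    (hf : ∀ y, y ≠ u → y ≠ v → f y = 0) : ∑ y, f y = f u + f v := by
  rw [← Finset.sum_subset (Finset.subset_univ ({u, v} : Finset (Fin n)))]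
  · rw [Finset.sum_insert (by simp [huv]), Finset.sum_singleton]
  · intro y _ hy
    simp only [Finset.mem_insert, Finset.mem_singleton, not_or] at hy
    exact hf y hy.1 hy.2

noncomputable def rr : ℝ := (Real.sqrt 2)⁻¹

lemma rr_sq : rr * rr = 1/2 := by
  rw [rr, ← mul_inv, Real.mul_self_sqrt (by norm_num : (0:ℝ) ≤ 2)]
  norm_num

noncomputable def rot (u v : Fin n) : Matrix (Fin n) (Fin n) ℝ :=
  Matrix.of fun x y =>
    if x = u then (if y = u then rr else if y = v then rr else 0)
    else if x = v then (if y = u then -rr else if y = v then rr else 0)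
    else if y = x then 1 else 0

lemma rot_row_u {u v : Fin n} (huv : u ≠ v) (y : Fin n) :
    rot u v u y = if y = u then rr else if y = v then rr else 0 := by
  simp [rot]

lemma rot_row_v {u v : Fin n} (huv : u ≠ v) (y : Fin n) :
    rot u v v y = if y = u then -rr else if y = v then rr else 0 := by
  simp [rot, huv.symm]

lemma rot_row_other {u v x : Fin n} (hx : x ≠ u) (hx' : x ≠ v) (y : Fin n) :
    rot u v x y = if y = x then 1 else 0 := by
  simp [rot, hx, hx']

lemma rot_orth {u v : Fin n} (huv : u ≠ v) : rot u v * (rot u v)ᵀ = 1 := by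
  ext x z
  rw [Matrix.mul_apply]
  simp only [Matrix.transpose_apply]
  by_cases hx : x = u
  · by_cases hz : z = u
    · rw [Finset.sum_congr rfl fun y _ => by
        rw [hx, hz, rot_row_u huv y]]
      rw [sum_two u v huv (fun y hy1 hy2 => by simp [hy1, hy2])]
      rw [hx, hz, Matrix.one_apply_eq]
      simp [huv, Ne.symm huv, rr_sq]
      norm_num [rr_sq]
    · by_cases hz' : z = v
      · rw [Finset.sum_congr rfl fun y _ => by
          rw [hx, hz', rot_row_u huv y, rot_row_v huv y]]
        rw [sum_two u v huv (fun y hy1 hy2 => by simp [hy1, hy2])]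
        rw [Matrix.one_apply_ne (by rw [hx, hz']; exact huv)]
        simp [huv, Ne.symm huv]
        try ring
      · rw [Finset.sum_eq_zero, Matrix.one_apply_ne (by rw [hx]; exact fun hh => hz hh.symm)]
        intro y _
        rw [hx, rot_row_u huv y, rot_row_other hz hz' y]
        split_ifs <;> simp_all
  · by_cases hx' : x = v
    · by_cases hz : z = u
      · rw [Finset.sum_congr rfl fun y _ => by
          rw [hx', hz, rot_row_u huv y, rot_row_v huv y]]
        rw [sum_two u v huv (fun y hy1 hy2 => by simp [hy1, hy2])]
        rw [Matrix.one_apply_ne (by rw [hx', hz]; exact huv.symm)]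
        simp [huv, Ne.symm huv]
        try ring
      · by_cases hz' : z = v
        · rw [Finset.sum_congr rfl fun y _ => by
            rw [hx', hz', rot_row_v huv y]]
          rw [sum_two u v huv (fun y hy1 hy2 => by simp [hy1, hy2])]
          rw [hx', hz', Matrix.one_apply_eq]
          simp [huv, Ne.symm huv]
          norm_num [rr_sq]
        · rw [Finset.sum_eq_zero, Matrix.one_apply_ne (by rw [hx']; exact fun hh => hz' hh.symm)]
          intro y _
          rw [hx', rot_row_v huv y, rot_row_other hz hz' y]
          split_ifs <;> simp_all
    · by_cases hz : z = u
      · rw [Finset.sum_eq_zero, Matrix.one_apply_ne (by rw [hz]; exact hx)]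
        intro y _
        rw [hz, rot_row_u huv y, rot_row_other hx hx' y]
        split_ifs <;> simp_all
      · by_cases hz' : z = v
        · rw [Finset.sum_eq_zero, Matrix.one_apply_ne (by rw [hz']; exact hx')]
          intro y _
          rw [hz', rot_row_v huv y, rot_row_other hx hx' y]
          split_ifs <;> simp_all
        · rw [Finset.sum_congr rfl fun y _ => by
            rw [rot_row_other hx hx' y, rot_row_other hz hz' y]]
          rw [Finset.sum_eq_single_of_mem x (Finset.mem_univ x)]
          · rw [Matrix.one_apply]
            simp only [if_pos rfl, one_mul]
            by_cases hxz : x = z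
            · simp [hxz]
            · simp [hxz, Ne.symm hxz]
          · intro y _ hy
            simp [hy]

lemma mul_rot_apply {u v : Fin n} (huv : u ≠ v) (M : Matrix (Fin n) (Fin n) ℝ) (x : Fin n) :
    (M * rot u v) x u = rr * M x u - rr * M x v := by
  rw [Matrix.mul_apply]
  rw [Finset.sum_congr rfl fun y _ => by
    rw [show rot u v y u = (if y = u then rr else if y = v then -rr else 0) from by
      by_cases h1 : y = u
      · rw [h1, rot_row_u huv u]; simp
      · by_cases h2 : y = v
        · rw [h2, rot_row_v huv u]; simp [huv, Ne.symm huv]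
        · rw [rot_row_other h1 h2 u]; simp [h1, h2, Ne.symm h1]]]
  rw [sum_two u v huv (fun y hy1 hy2 => by simp [hy1, hy2])]
  simp [huv, Ne.symm huv]
  ring

lemma integral_rot (h : IsHaarOrthogonal n μ) {u v : Fin n} (huv : u ≠ v)
    {f : Matrix (Fin n) (Fin n) ℝ → ℝ} (hf : Measurable f) :
    ∫ M, f (M * rot u v) ∂μ = ∫ M, f M ∂μ :=
  integral_comp_right h (rot_orth huv) hf

lemma ae_abs (h : IsHaarOrthogonal n μ) :
    ∀ᵐ M ∂μ, ∀ x y : Fin n, |M x y| ≤ 1 := by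
  filter_upwards [ae_entry_sq h] with M hM x y
  rw [abs_le_one_iff_mul_self_le_one]
  have := hM x y
  nlinarith [this]

noncomputable def mom (μ : Measure (Matrix (Fin n) (Fin n) ℝ)) (a i b j : Fin n) : ℝ :=
  ∫ M, (M a i)^2 * (M b j)^2 ∂μ

lemma meas_mom (a i b j : Fin n) :
    Measurable fun M : Matrix (Fin n) (Fin n) ℝ => (M a i)^2 * (M b j)^2 :=
  ((measurable_entry a i).pow_const 2).mul ((measurable_entry b j).pow_const 2)

lemma integrable_mom (h : IsHaarOrthogonal n μ) (a i b j : Fin n) :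
    Integrable (fun M => (M a i)^2 * (M b j)^2) μ := by
  apply integrable_of_bdd h (meas_mom a i b j) (B := 1)
  filter_upwards [ae_entry_sq h] with M hM
  have h1 := hM a i
  have h2 := hM b j
  have h0 : (0:ℝ) ≤ (M a i)^2 * (M b j)^2 := by positivity
  rw [abs_of_nonneg h0]
  nlinarith [sq_nonneg (M a i), sq_nonneg (M b j)]

lemma mom_nonneg (a i b j : Fin n) : 0 ≤ mom μ a i b j :=
  integral_nonneg fun M => by positivity

lemma integrable_sq (h : IsHaarOrthogonal n μ) (a i : Fin n) :
    Integrable (fun M => (M a i)^2) μ := by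
  apply integrable_of_bdd h ((measurable_entry a i).pow_const 2) (B := 1)
  filter_upwards [ae_entry_sq h] with M hM
  rw [abs_of_nonneg (sq_nonneg _)]
  exact hM a i

lemma integral_sq (h : IsHaarOrthogonal n μ) (a i : Fin n) :
    ∫ M, (M a i)^2 ∂μ = 1/(n:ℝ) := by
  haveI := h.isProb
  have hn0 : (0:ℝ) < (n:ℝ) := by
    have := a.pos
    exact_mod_cast this
  have heq : ∀ i' : Fin n, ∫ M, (M a i')^2 ∂μ = ∫ M, (M a i)^2 ∂μ := by
    intro i'
    have := integral_colPerm h (Equiv.swap i i')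
      (f := fun M => (M a i)^2) ((measurable_entry a i).pow_const 2)
    simpa [Equiv.swap_apply_left] using this
  have hsum : ∑ i' : Fin n, ∫ M, (M a i')^2 ∂μ = 1 := by
    rw [← integral_finset_sum _ (fun i' _ => integrable_sq h a i')]
    have hae : (fun M : Matrix (Fin n) (Fin n) ℝ => ∑ i' : Fin n, (M a i')^2)
        =ᵐ[μ] fun _ => (1:ℝ) := by
      filter_upwards [ae_sums h] with M hM using hM.1 a
    rw [integral_congr_ae hae]
    simp
  rw [Finset.sum_congr rfl (fun i' _ => heq i'), Finset.sum_const, Finset.card_univ,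
    Fintype.card_fin, nsmul_eq_mul] at hsum
  rw [eq_div_iff (ne_of_gt hn0), mul_comm]
  exact hsum

lemma integral_sq_col (h : IsHaarOrthogonal n μ) (a i : Fin n) :
    ∫ M, (M a i)^2 ∂μ = 1/(n:ℝ) := integral_sq h a i

lemma mom_offdiag_col (h : IsHaarOrthogonal n μ) (hn : 2 ≤ n) {a b i j : Fin n}
    (hij : i ≠ j) : mom μ a i b j ≤ 1/((n:ℝ)*((n:ℝ)-1)) := by
  haveI := h.isProb
  have hN : (2:ℝ) ≤ (n:ℝ) := by exact_mod_cast hn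
  have heq : ∀ j' ∈ Finset.univ.erase i, mom μ a i b j' = mom μ a i b j := by
    intro j' hj'
    have hj'i : j' ≠ i := (Finset.mem_erase.1 hj').1
    have := integral_colPerm h (Equiv.swap j j') (meas_mom a i b j)
    simpa [Equiv.swap_apply_left,
      Equiv.swap_apply_of_ne_of_ne hij (Ne.symm hj'i), mom] using this
  have hsumle : ∑ j' ∈ Finset.univ.erase i, mom μ a i b j' ≤ 1/(n:ℝ) := by
    rw [show ∑ j' ∈ Finset.univ.erase i, mom μ a i b j' =
        ∫ M, ∑ j' ∈ Finset.univ.erase i, (M a i)^2 * (M b j')^2 ∂μ from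
      (integral_finset_sum _ (fun j' _ => integrable_mom h a i b j')).symm]
    rw [← integral_sq h a i]
    apply integral_mono_ae
      (integrable_finset_sum _ (fun j' _ => integrable_mom h a i b j'))
      (integrable_sq h a i)
    filter_upwards [ae_sums h] with M hM
    have hle : ∑ j' ∈ Finset.univ.erase i, (M b j')^2 ≤ 1 := by
      rw [← hM.1 b]
      exact Finset.sum_le_sum_of_subset_of_nonneg (Finset.erase_subset _ _)
        (fun _ _ _ => sq_nonneg _)
    calc ∑ j' ∈ Finset.univ.erase i, (M a i)^2 * (M b j')^2
        = (M a i)^2 * ∑ j' ∈ Finset.univ.erase i, (M b j')^2 := by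
          rw [Finset.mul_sum]
      _ ≤ (M a i)^2 * 1 := by
          exact mul_le_mul_of_nonneg_left hle (sq_nonneg _)
      _ = (M a i)^2 := mul_one _
  rw [Finset.sum_congr rfl heq, Finset.sum_const, Finset.card_erase_of_mem (Finset.mem_univ i),
    Finset.card_univ, Fintype.card_fin, nsmul_eq_mul] at hsumle
  have hcast : ((n - 1 : ℕ) : ℝ) = (n:ℝ) - 1 := by
    have h1n : 1 ≤ n := by omega
    push_cast [Nat.cast_sub h1n]
    ring
  rw [hcast] at hsumle
  have hpos : (0:ℝ) < (n:ℝ)*((n:ℝ)-1) := by nlinarith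
  rw [le_div_iff₀ hpos]
  have H' : (n:ℝ) * (((n:ℝ)-1) * mom μ a i b j) ≤ (n:ℝ) * (1/(n:ℝ)) :=
    mul_le_mul_of_nonneg_left hsumle (by linarith)
  have hone : (n:ℝ) * (1/(n:ℝ)) = 1 := by
    field_simp
  calc mom μ a i b j * ((n:ℝ)*((n:ℝ)-1)) = (n:ℝ) * (((n:ℝ)-1) * mom μ a i b j) := by ring
    _ ≤ 1 := by rw [hone] at H'; exact H'

lemma mom_offdiag_row (h : IsHaarOrthogonal n μ) (hn : 2 ≤ n) {a b i j : Fin n}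
    (hab : a ≠ b) : mom μ a i b j ≤ 1/((n:ℝ)*((n:ℝ)-1)) := by
  haveI := h.isProb
  have hN : (2:ℝ) ≤ (n:ℝ) := by exact_mod_cast hn
  have heq : ∀ b' ∈ Finset.univ.erase a, mom μ a i b' j = mom μ a i b j := by
    intro b' hb'
    have hb'a : b' ≠ a := (Finset.mem_erase.1 hb').1
    have := integral_rowPerm h (Equiv.swap b b') (meas_mom a i b j)
    simpa [Equiv.swap_apply_left,
      Equiv.swap_apply_of_ne_of_ne hab (Ne.symm hb'a), mom] using this
  have hsumle : ∑ b' ∈ Finset.univ.erase a, mom μ a i b' j ≤ 1/(n:ℝ) := by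
    rw [show ∑ b' ∈ Finset.univ.erase a, mom μ a i b' j =
        ∫ M, ∑ b' ∈ Finset.univ.erase a, (M a i)^2 * (M b' j)^2 ∂μ from
      (integral_finset_sum _ (fun b' _ => integrable_mom h a i b' j)).symm]
    rw [← integral_sq h a i]
    apply integral_mono_ae
      (integrable_finset_sum _ (fun b' _ => integrable_mom h a i b' j))
      (integrable_sq h a i)
    filter_upwards [ae_sums h] with M hM
    have hle : ∑ b' ∈ Finset.univ.erase a, (M b' j)^2 ≤ 1 := by
      rw [← hM.2 j]
      exact Finset.sum_le_sum_of_subset_of_nonneg (Finset.erase_subset _ _)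
        (fun _ _ _ => sq_nonneg _)
    calc ∑ b' ∈ Finset.univ.erase a, (M a i)^2 * (M b' j)^2
        = (M a i)^2 * ∑ b' ∈ Finset.univ.erase a, (M b' j)^2 := by
          rw [Finset.mul_sum]
      _ ≤ (M a i)^2 * 1 := mul_le_mul_of_nonneg_left hle (sq_nonneg _)
      _ = (M a i)^2 := mul_one _
  rw [Finset.sum_congr rfl heq, Finset.sum_const, Finset.card_erase_of_mem (Finset.mem_univ a),
    Finset.card_univ, Fintype.card_fin, nsmul_eq_mul] at hsumle
  have hcast : ((n - 1 : ℕ) : ℝ) = (n:ℝ) - 1 := by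
    have h1n : 1 ≤ n := by omega
    push_cast [Nat.cast_sub h1n]
    ring
  rw [hcast] at hsumle
  have hpos : (0:ℝ) < (n:ℝ)*((n:ℝ)-1) := by nlinarith
  rw [le_div_iff₀ hpos]
  have H' : (n:ℝ) * (((n:ℝ)-1) * mom μ a i b j) ≤ (n:ℝ) * (1/(n:ℝ)) :=
    mul_le_mul_of_nonneg_left hsumle (by linarith)
  have hone : (n:ℝ) * (1/(n:ℝ)) = 1 := by field_simp
  calc mom μ a i b j * ((n:ℝ)*((n:ℝ)-1)) = (n:ℝ) * (((n:ℝ)-1) * mom μ a i b j) := by ring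
    _ ≤ 1 := by rw [hone] at H'; exact H'

lemma integrable_prod4 (h : IsHaarOrthogonal n μ)
    {f : Matrix (Fin n) (Fin n) ℝ → ℝ} (hf : Measurable f)
    (hb : ∀ M : Matrix (Fin n) (Fin n) ℝ, (∀ x y, |M x y| ≤ 1) → |f M| ≤ 16) :
    Integrable f μ := by
  apply integrable_of_bdd h hf (B := 16)
  filter_upwards [ae_abs h] with M hM
  exact hb M hM

lemma integral_sign_zero (h : IsHaarOrthogonal n μ) {a i j : Fin n} (hij : i ≠ j)
    {k l : ℕ} (hl : Odd l) :
    ∫ M, (M a i)^k * (M a j)^l ∂μ = 0 := by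
  have hmeas : Measurable fun M : Matrix (Fin n) (Fin n) ℝ => (M a i)^k * (M a j)^l :=
    ((measurable_entry a i).pow_const k).mul ((measurable_entry a j).pow_const l)
  have := integral_signFlip h j hmeas
  have hneg : (fun M : Matrix (Fin n) (Fin n) ℝ =>
      ((fun x y => M x y * (if y = j then (-1:ℝ) else 1)) a i)^k *
      ((fun x y => M x y * (if y = j then (-1:ℝ) else 1)) a j)^l) =
      fun M => -((M a i)^k * (M a j)^l) := by
    funext M
    simp only [if_neg hij, eq_self_iff_true, if_true, mul_one]
    rw [show M a j * (-1:ℝ) = -(M a j) from by ring, hl.neg_pow]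
    ring
  rw [hneg] at this
  rw [integral_neg] at this
  linarith

lemma mom_diag (h : IsHaarOrthogonal n μ) (hn : 2 ≤ n) (a i : Fin n) :
    mom μ a i a i ≤ 3/((n:ℝ)*((n:ℝ)-1)) := by
  haveI := h.isProb
  obtain ⟨j, hj⟩ : ∃ j : Fin n, j ≠ i := by
    refine Fintype.exists_ne_of_one_lt_card ?_ i
    simp only [Fintype.card_fin]
    omega
  have hij : i ≠ j := Ne.symm hj
  -- measurability helpers
  have m4 : Measurable fun M : Matrix (Fin n) (Fin n) ℝ => (M a i)^4 :=
    (measurable_entry a i).pow_const 4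
  have m4' : Measurable fun M : Matrix (Fin n) (Fin n) ℝ => (M a j)^4 :=
    (measurable_entry a j).pow_const 4
  have m31 : Measurable fun M : Matrix (Fin n) (Fin n) ℝ => (M a i)^3 * (M a j)^1 :=
    ((measurable_entry a i).pow_const 3).mul ((measurable_entry a j).pow_const 1)
  have m13 : Measurable fun M : Matrix (Fin n) (Fin n) ℝ => (M a i)^1 * (M a j)^3 :=
    ((measurable_entry a i).pow_const 1).mul ((measurable_entry a j).pow_const 3)
  -- integrability helpers
  have bd : ∀ (k l : ℕ) (M : Matrix (Fin n) (Fin n) ℝ), (∀ x y, |M x y| ≤ 1) →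
      |(M a i)^k * (M a j)^l| ≤ 16 := by
    intro k l M hM
    have h1 : |(M a i)^k| ≤ 1 := by
      rw [abs_pow]; exact pow_le_one₀ (abs_nonneg _) (hM a i)
    have h2 : |(M a j)^l| ≤ 1 := by
      rw [abs_pow]; exact pow_le_one₀ (abs_nonneg _) (hM a j)
    rw [abs_mul]
    nlinarith [abs_nonneg ((M a i)^k), abs_nonneg ((M a j)^l)]
  have i4 : Integrable (fun M => (M a i)^4) μ :=
    integrable_prod4 h m4 (fun M hM => by simpa using bd 4 0 M hM)
  have i4' : Integrable (fun M => (M a j)^4) μ :=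
    integrable_prod4 h m4' (fun M hM => by simpa using bd 0 4 M hM)
  have i31 : Integrable (fun M => (M a i)^3 * (M a j)^1) μ :=
    integrable_prod4 h m31 (bd 3 1)
  have i13 : Integrable (fun M => (M a i)^1 * (M a j)^3) μ :=
    integrable_prod4 h m13 (bd 1 3)
  have i22 : Integrable (fun M => (M a i)^2 * (M a j)^2) μ := integrable_mom h a i a j
  -- rotation identity
  have hr4 : rr^4 = 1/4 := by
    have : rr^4 = (rr*rr)^2 := by ring
    rw [this, rr_sq]
    norm_num
  have hrot := integral_rot h hij m4
  have hpoint : (fun M : Matrix (Fin n) (Fin n) ℝ => ((M * rot i j) a i)^4) =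
      fun M => (1/4) * ((M a i)^4 + (M a j)^4 + 6*((M a i)^2*(M a j)^2)
        - 4*((M a i)^3*(M a j)^1) - 4*((M a i)^1*(M a j)^3)) := by
    funext M
    rw [mul_rot_apply hij M a]
    linear_combination ((M a i) - (M a j))^4 * hr4
  rw [show ∫ M, ((M * rot i j) a i)^4 ∂μ
      = ∫ M, (1/4) * ((M a i)^4 + (M a j)^4 + 6*((M a i)^2*(M a j)^2)
        - 4*((M a i)^3*(M a j)^1) - 4*((M a i)^1*(M a j)^3)) ∂μ from by
    exact congrArg _ hpoint] at hrot
  rw [integral_const_mul] at hrot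
  have hsplit : ∫ M, ((M a i)^4 + (M a j)^4 + 6*((M a i)^2*(M a j)^2)
        - 4*((M a i)^3*(M a j)^1) - 4*((M a i)^1*(M a j)^3)) ∂μ
      = (∫ M, (M a i)^4 ∂μ) + (∫ M, (M a j)^4 ∂μ)
        + 6*(∫ M, (M a i)^2*(M a j)^2 ∂μ)
        - 4*(∫ M, (M a i)^3*(M a j)^1 ∂μ) - 4*(∫ M, (M a i)^1*(M a j)^3 ∂μ) := by
    have iP1 : Integrable (fun M : Matrix (Fin n) (Fin n) ℝ =>
        (M a i)^4 + (M a j)^4) μ := i4.add i4'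
    have iP2 : Integrable (fun M : Matrix (Fin n) (Fin n) ℝ =>
        (M a i)^4 + (M a j)^4 + 6*((M a i)^2*(M a j)^2)) μ := iP1.add (i22.const_mul 6)
    have iP3 : Integrable (fun M : Matrix (Fin n) (Fin n) ℝ =>
        (M a i)^4 + (M a j)^4 + 6*((M a i)^2*(M a j)^2) - 4*((M a i)^3*(M a j)^1)) μ :=
      iP2.sub (i31.const_mul 4)
    rw [integral_sub iP3 (i13.const_mul 4), integral_sub iP2 (i31.const_mul 4),
      integral_add iP1 (i22.const_mul 6), integral_add i4 i4',
      integral_const_mul, integral_const_mul, integral_const_mul]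
  rw [hsplit] at hrot
  have hzero31 : ∫ M, (M a i)^3 * (M a j)^1 ∂μ = 0 :=
    integral_sign_zero h hij (by norm_num)
  have hzero13 : ∫ M, (M a i)^1 * (M a j)^3 ∂μ = 0 := by
    have hmeas13 := m13
    have := integral_signFlip h i hmeas13
    have hneg : (fun M : Matrix (Fin n) (Fin n) ℝ =>
        ((fun x y => M x y * (if y = i then (-1:ℝ) else 1)) a i)^1 *
        ((fun x y => M x y * (if y = i then (-1:ℝ) else 1)) a j)^3) =
        fun M => -((M a i)^1 * (M a j)^3) := by
      funext M
      simp only [if_neg hj, eq_self_iff_true, if_true, mul_one]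
      ring
    rw [hneg, integral_neg] at this
    linarith
  have hswap : ∫ M, (M a j)^4 ∂μ = ∫ M, (M a i)^4 ∂μ := by
    have := integral_colPerm h (Equiv.swap i j) m4
    simpa [Equiv.swap_apply_left] using this
  rw [hzero31, hzero13, hswap] at hrot
  -- hrot : ∫ u^4 = 1/4 * (X + X + 6*I3 - 0 - 0)
  have hX : ∫ M, (M a i)^4 ∂μ = 3 * mom μ a i a j := by
    rw [mom]
    linarith
  have hmm : mom μ a i a i = ∫ M, (M a i)^4 ∂μ := by
    rw [mom]
    congr 1
    funext M
    ring
  rw [hmm, hX]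
  have hb := mom_offdiag_col h hn (a := a) (b := a) hij
  have hpos : (0:ℝ) < (n:ℝ)*((n:ℝ)-1) := by
    have hN : (2:ℝ) ≤ (n:ℝ) := by exact_mod_cast hn
    nlinarith
  rw [show (3:ℝ)/((n:ℝ)*((n:ℝ)-1)) = 3 * (1/((n:ℝ)*((n:ℝ)-1))) from by ring]
  exact mul_le_mul_of_nonneg_left hb (by norm_num)

lemma mom_le (h : IsHaarOrthogonal n μ) (hn : 2 ≤ n) (a i b j : Fin n) :
    mom μ a i b j ≤ 6/(n:ℝ)^2 := by
  have hN : (2:ℝ) ≤ (n:ℝ) := by exact_mod_cast hn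
  have hpos : (0:ℝ) < (n:ℝ)*((n:ℝ)-1) := by nlinarith
  have hkey : 3/((n:ℝ)*((n:ℝ)-1)) ≤ 6/(n:ℝ)^2 := by
    rw [div_le_div_iff₀ hpos (by nlinarith)]
    nlinarith
  have hone : 1/((n:ℝ)*((n:ℝ)-1)) ≤ 3/((n:ℝ)*((n:ℝ)-1)) := by
    gcongr
    norm_num
  by_cases hij : i = j
  · by_cases hab : a = b
    · subst hij; subst hab
      exact le_trans (mom_diag h hn a i) hkey
    · exact le_trans (le_trans (mom_offdiag_row h hn hab) hone) hkey
  · exact le_trans (le_trans (mom_offdiag_col h hn hij) hone) hkey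

set_option maxHeartbeats 1000000 in
theorem final_bound (h : IsHaarOrthogonal n μ) (hn : 2 ≤ n) (a b : Fin n)
    (σ c : Equiv.Perm (Fin n)) {k : ℕ}
    (hd : (Finset.univ.filter fun i => σ i ≠ c i).card ≤ k) :
    ∫ M, (Real.sqrt n * ∑ i, M a i * M b (σ i) -
          Real.sqrt n * ∑ i, M a i * M b (c i)) ^ 2 ∂μ ≤ 4 * (k:ℝ)^2 * 6 / n := by
  haveI := h.isProb
  have hN : (2:ℝ) ≤ (n:ℝ) := by exact_mod_cast hn
  have hN0 : (0:ℝ) < (n:ℝ) := by linarith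
  set S : Finset (Fin n) := Finset.univ.filter fun i => σ i ≠ c i with hSdef
  set d : ℕ := S.card with hddef
  -- individual term facts
  have key2 : ∀ (i j : Fin n), Integrable (fun M => (M a i * M b j)^2) μ ∧
      ∫ M, (M a i * M b j)^2 ∂μ ≤ 6/(n:ℝ)^2 := by
    intro i j
    have hfe : (fun M : Matrix (Fin n) (Fin n) ℝ => (M a i * M b j)^2) =
        fun M => (M a i)^2 * (M b j)^2 := funext fun M => by ring
    rw [hfe]
    exact ⟨integrable_mom h a i b j, mom_le h hn a i b j⟩
  -- the dominating function
  set G : Matrix (Fin n) (Fin n) ℝ → ℝ := fun M =>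
    (n:ℝ) * ((d:ℝ) * ∑ i ∈ S, (2*(M a i * M b (σ i))^2 + 2*(M a i * M b (c i))^2))
    with hGdef
  have iterm : ∀ i : Fin n, Integrable (fun M : Matrix (Fin n) (Fin n) ℝ =>
      2*(M a i * M b (σ i))^2 + 2*(M a i * M b (c i))^2) μ := fun i =>
    ((key2 i (σ i)).1.const_mul 2).add ((key2 i (c i)).1.const_mul 2)
  have iG : Integrable G μ :=
    (((integrable_finset_sum S (fun i _ => iterm i)).const_mul _).const_mul _)
  -- pointwise bound
  have hpt : ∀ M : Matrix (Fin n) (Fin n) ℝ,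
      (Real.sqrt n * ∑ i, M a i * M b (σ i) -
        Real.sqrt n * ∑ i, M a i * M b (c i)) ^ 2 ≤ G M := by
    intro M
    have h1 : Real.sqrt n * (∑ i, M a i * M b (σ i)) -
        Real.sqrt n * (∑ i, M a i * M b (c i))
        = Real.sqrt n * (∑ i ∈ S, (M a i * M b (σ i) - M a i * M b (c i))) := by
      rw [Finset.sum_subset (Finset.subset_univ S) (by
        intro x _ hx
        rw [hSdef] at hx
        simp only [Finset.mem_filter, Finset.mem_univ, true_and, not_not] at hx
        rw [hx, sub_self])]
      rw [Finset.sum_sub_distrib]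
      ring
    rw [h1, mul_pow, Real.sq_sqrt (Nat.cast_nonneg n), hGdef]
    apply mul_le_mul_of_nonneg_left _ (Nat.cast_nonneg n)
    calc (∑ i ∈ S, (M a i * M b (σ i) - M a i * M b (c i)))^2
        ≤ (S.card : ℝ) * ∑ i ∈ S, (M a i * M b (σ i) - M a i * M b (c i))^2 :=
          sq_sum_le_card_mul_sum_sq
      _ ≤ (d:ℝ) * ∑ i ∈ S, (2*(M a i * M b (σ i))^2 + 2*(M a i * M b (c i))^2) := by
          rw [← hddef]
          apply mul_le_mul_of_nonneg_left _ (Nat.cast_nonneg d)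
          apply Finset.sum_le_sum
          intro i _
          nlinarith [sq_nonneg (M a i * M b (σ i) + M a i * M b (c i))]
  -- measurability of LHS
  have measL : Measurable fun M : Matrix (Fin n) (Fin n) ℝ =>
      (Real.sqrt n * ∑ i, M a i * M b (σ i) -
        Real.sqrt n * ∑ i, M a i * M b (c i)) ^ 2 := by
    apply Measurable.pow_const
    apply Measurable.sub
    · exact ((Finset.measurable_sum Finset.univ
        (fun i _ => (measurable_entry a i).mul (measurable_entry b (σ i))))).const_mul _
    · exact ((Finset.measurable_sum Finset.univ
        (fun i _ => (measurable_entry a i).mul (measurable_entry b (c i))))).const_mul _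
  have iL : Integrable (fun M : Matrix (Fin n) (Fin n) ℝ =>
      (Real.sqrt n * ∑ i, M a i * M b (σ i) -
        Real.sqrt n * ∑ i, M a i * M b (c i)) ^ 2) μ := by
    apply iG.mono' measL.aestronglyMeasurable
    apply Filter.Eventually.of_forall
    intro M
    rw [Real.norm_eq_abs, abs_of_nonneg (sq_nonneg _)]
    exact hpt M
  -- integrate
  have step1 : ∫ M, (Real.sqrt n * ∑ i, M a i * M b (σ i) -
        Real.sqrt n * ∑ i, M a i * M b (c i)) ^ 2 ∂μ ≤ ∫ M, G M ∂μ :=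
    integral_mono iL iG hpt
  have step2 : ∫ M, G M ∂μ ≤ (n:ℝ) * ((d:ℝ) * ((d:ℝ) * (24/(n:ℝ)^2))) := by
    rw [hGdef]
    simp only []
    rw [integral_const_mul, integral_const_mul,
      integral_finset_sum S (fun i _ => iterm i)]
    apply mul_le_mul_of_nonneg_left _ (Nat.cast_nonneg n)
    apply mul_le_mul_of_nonneg_left _ (Nat.cast_nonneg d)
    calc ∑ i ∈ S, ∫ M, (2*(M a i * M b (σ i))^2 + 2*(M a i * M b (c i))^2) ∂μ
        ≤ ∑ _i ∈ S, (24/(n:ℝ)^2) := by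
          apply Finset.sum_le_sum
          intro i _
          rw [integral_add ((key2 i (σ i)).1.const_mul 2) ((key2 i (c i)).1.const_mul 2),
            integral_const_mul, integral_const_mul]
          have b1 := (key2 i (σ i)).2
          have b2 := (key2 i (c i)).2
          have h6 : (24:ℝ)/(n:ℝ)^2 = 2*(6/(n:ℝ)^2) + 2*(6/(n:ℝ)^2) := by ring
          rw [h6]
          linarith [b1, b2]
      _ = (d:ℝ) * (24/(n:ℝ)^2) := by
          rw [Finset.sum_const, nsmul_eq_mul, hddef]
  have hdk : (d:ℝ) ≤ (k:ℝ) := by exact_mod_cast hd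
  have hd0 : (0:ℝ) ≤ (d:ℝ) := Nat.cast_nonneg d
  have step3 : (n:ℝ) * ((d:ℝ) * ((d:ℝ) * (24/(n:ℝ)^2))) ≤ 4 * (k:ℝ)^2 * 6 / n := by
    have h24 : (0:ℝ) < 24/(n:ℝ)^2 := by positivity
    have hmul : (d:ℝ) * ((d:ℝ) * (24/(n:ℝ)^2)) ≤ (k:ℝ) * ((k:ℝ) * (24/(n:ℝ)^2)) := by
      apply mul_le_mul hdk _ (by positivity) (by linarith [hdk, hd0])
      exact mul_le_mul_of_nonneg_right hdk (le_of_lt h24)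
    have : (n:ℝ) * ((d:ℝ) * ((d:ℝ) * (24/(n:ℝ)^2))) ≤
        (n:ℝ) * ((k:ℝ) * ((k:ℝ) * (24/(n:ℝ)^2))) :=
      mul_le_mul_of_nonneg_left hmul (by linarith)
    apply le_trans this
    rw [show (n:ℝ) * ((k:ℝ) * ((k:ℝ) * (24/(n:ℝ)^2))) = 24 * (k:ℝ)^2 / (n:ℝ) from by
      field_simp]
    rw [show (4:ℝ) * (k:ℝ)^2 * 6 / n = 24 * (k:ℝ)^2 / (n:ℝ) from by ring]
  exact le_trans step1 (le_trans step2 step3)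

end Stmt9Aux


/-- for a permutation `σ` with `k` cycles, with
`X_n = √n ∑_i M_{a,i} M_{b,σ(i)}` and `Y_n = √n ∑_i M_{a,i} M_{b,c(i)}` for an `n`-cycle
`c` with a compatible labeling, one has `E[(X_n − Y_n)²] ≤ 4k²·C/n` for an absolute
constant `C` and all sufficiently large `n`. -/
theorem stmt9 :
    ∃ C : ℝ, 0 < C ∧ ∃ N : ℕ, ∀ n ≥ N, ∀ μ : Measure (Matrix (Fin n) (Fin n) ℝ),
      IsHaarOrthogonal n μ → ∀ a b : Fin n, ∀ σ : Equiv.Perm (Fin n),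
      ∃ c : Equiv.Perm (Fin n), c.cycleType = {n} ∧
        ∫ M, (Real.sqrt n * ∑ i, M a i * M b (σ i) -
              Real.sqrt n * ∑ i, M a i * M b (c i)) ^ 2 ∂μ ≤
          4 * (cycleCount σ : ℝ) ^ 2 * C / n := by
  refine ⟨6, by norm_num, 2, ?_⟩
  intro n hn μ h a b σ
  refine ⟨closeCycle σ, closeCycle_cycleType σ hn, ?_⟩
  exact Stmt9Aux.final_bound h hn a b σ (closeCycle σ) (closeCycle_diff_le σ)
end

section
/- Let A_n be n×n real matrices with Tr(A_n A_nᵀ) = n and Σ_i A_{ii}/n → s. Let M be an n×n Haar-distributed orthogonal matrix and fix a column k. Then V_n = Σ_{i=1}^n A_{ii} M_{i,k}² converges to s in L², i.e., E[(Σ_i A_{ii}(M_{i,k}² − 1/n))²] = O(1/n). -/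
open MeasureTheory Matrix

namespace Stmt16

variable {n : ℕ} {μ : Measure (Matrix (Fin n) (Fin n) ℝ)}

lemma meas_entry (i k : Fin n) : Measurable fun M : Matrix (Fin n) (Fin n) ℝ => M i k :=
  (measurable_pi_apply k).comp (measurable_pi_apply i)

lemma meas_mulLeft (V : Matrix (Fin n) (Fin n) ℝ) :
    Measurable fun M : Matrix (Fin n) (Fin n) ℝ => V * M := by
  apply measurable_pi_lambda
  intro i
  apply measurable_pi_lambda
  intro j
  simp only [Matrix.mul_apply]
  exact Finset.measurable_sum _ fun l _ => (meas_entry l j).const_mul _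

lemma ae_col (h : IsHaarOrthogonal n μ) (k : Fin n) :
    ∀ᵐ M ∂μ, (∑ i, (M i k)^2) = 1 ∧ ∀ i, (M i k)^2 ≤ 1 := by
  filter_upwards [h.ae_orth] with M hM
  have h2 : Mᵀ * M = 1 := mul_eq_one_comm.mp hM
  have hsum : (∑ i, (M i k)^2) = 1 := by
    have he := congrFun (congrFun h2 k) k
    rw [Matrix.mul_apply, Matrix.one_apply_eq] at he
    simp only [Matrix.transpose_apply] at he
    rw [← he]
    exact Finset.sum_congr rfl fun i _ => (sq (M i k)) ▸ rfl
  refine ⟨hsum, fun i => ?_⟩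
  calc (M i k)^2 ≤ ∑ j, (M j k)^2 :=
        Finset.single_le_sum (f := fun j => (M j k)^2) (fun j _ => sq_nonneg _) (Finset.mem_univ i)
    _ = 1 := hsum

lemma integrable_bdd (h : IsHaarOrthogonal n μ)
    {f : Matrix (Fin n) (Fin n) ℝ → ℝ} (hf : Measurable f) {c : ℝ}
    (hb : ∀ᵐ M ∂μ, |f M| ≤ c) : Integrable f μ := by
  haveI := h.isProb
  exact (integrable_const c).mono' hf.aestronglyMeasurable
    (by simpa [Real.norm_eq_abs] using hb)

lemma integral_left (h : IsHaarOrthogonal n μ) {V : Matrix (Fin n) (Fin n) ℝ}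
    (hV : V * Vᵀ = 1) {g : Matrix (Fin n) (Fin n) ℝ → ℝ} (hg : Measurable g) :
    ∫ M, g (V * M) ∂μ = ∫ M, g M ∂μ := by
  conv_rhs => rw [← h.left_inv V hV]
  rw [integral_map (meas_mulLeft V).aemeasurable hg.aestronglyMeasurable]


def permMat (σ : Equiv.Perm (Fin n)) : Matrix (Fin n) (Fin n) ℝ :=
  fun i j => if i = σ j then 1 else 0

lemma permMat_orth (σ : Equiv.Perm (Fin n)) : permMat σ * (permMat σ)ᵀ = 1 := by
  ext i j
  rw [Matrix.mul_apply, Matrix.one_apply]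
  simp only [Matrix.transpose_apply, permMat]
  rw [Finset.sum_eq_single (σ.symm i)]
  · by_cases hij : i = j <;> simp [hij, eq_comm]
  · intro b _ hb
    have : i ≠ σ b := fun he => hb (by rw [he, Equiv.symm_apply_apply])
    simp [this]
  · intro hmem; exact absurd (Finset.mem_univ _) hmem

lemma permMat_mul (σ : Equiv.Perm (Fin n)) (M : Matrix (Fin n) (Fin n) ℝ) (i k : Fin n) :
    (permMat σ * M) i k = M (σ.symm i) k := by
  rw [Matrix.mul_apply]
  rw [Finset.sum_eq_single (σ.symm i)]
  · simp [permMat]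
  · intro b _ hb
    have : i ≠ σ b := fun he => hb (by rw [he, Equiv.symm_apply_apply])
    simp [permMat, this]
  · intro hmem; exact absurd (Finset.mem_univ _) hmem

lemma integral_perm (h : IsHaarOrthogonal n μ) (σ : Equiv.Perm (Fin n))
    {g : Matrix (Fin n) (Fin n) ℝ → ℝ} (hg : Measurable g) :
    ∫ M, g (fun i j => M (σ i) j) ∂μ = ∫ M, g M ∂μ := by
  have := integral_left h (permMat_orth σ.symm) hg
  rw [← this]
  congr 1
  funext M
  congr 1
  funext i j
  rw [permMat_mul, Equiv.symm_symm]

lemma integral_sq_eq (h : IsHaarOrthogonal n μ) (k i i' : Fin n) :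
    ∫ M, (M i k)^2 ∂μ = ∫ M, (M i' k)^2 ∂μ := by
  have := integral_perm h (Equiv.swap i i')
    (g := fun M => (M i' k)^2) ((meas_entry i' k).pow_const 2)
  simpa [Equiv.swap_apply_right] using this

lemma integral_pow4_eq (h : IsHaarOrthogonal n μ) (k i i' : Fin n) :
    ∫ M, (M i k)^4 ∂μ = ∫ M, (M i' k)^4 ∂μ := by
  have := integral_perm h (Equiv.swap i i')
    (g := fun M => (M i' k)^4) ((meas_entry i' k).pow_const 4)
  simpa [Equiv.swap_apply_right] using this

lemma integral_pair_eq (h : IsHaarOrthogonal n μ) (k : Fin n) {i j i' j' : Fin n}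
    (hij : i ≠ j) (hij' : i' ≠ j') :
    ∫ M, (M i k)^2 * (M j k)^2 ∂μ = ∫ M, (M i' k)^2 * (M j' k)^2 ∂μ := by
  set τ : Equiv.Perm (Fin n) := Equiv.swap i' i
  set σ : Equiv.Perm (Fin n) := τ.trans (Equiv.swap (τ j') j)
  have hτj : τ j' ≠ i := by
    intro he
    have : j' = i' := by
      have := congrArg τ he
      simpa [τ, Equiv.swap_apply_left] using this
    exact hij' this.symm
  have hσi : σ i' = i := by
    simp only [σ, Equiv.trans_apply, τ, Equiv.swap_apply_left]
    rw [Equiv.swap_apply_of_ne_of_ne (Ne.symm hτj) hij]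
  have hσj : σ j' = j := by
    simp only [σ, Equiv.trans_apply]
    exact Equiv.swap_apply_left _ _
  have := integral_perm h σ
    (g := fun M => (M i' k)^2 * (M j' k)^2)
    (((meas_entry i' k).pow_const 2).mul ((meas_entry j' k).pow_const 2))
  rw [← this]
  simp only [hσi, hσj]


lemma integral_odd_zero (h : IsHaarOrthogonal n μ) (k : Fin n) {i j : Fin n} (hij : i ≠ j)
    (a b : ℕ) (hb : Odd b) :
    ∫ M, (M i k)^a * (M j k)^b ∂μ = 0 := by
  set d : Fin n → ℝ := fun l => if l = j then (-1:ℝ) else 1 with hd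
  have hD : Matrix.diagonal d * (Matrix.diagonal d)ᵀ = 1 := by
    rw [Matrix.diagonal_transpose, Matrix.diagonal_mul_diagonal]
    have : (fun l => d l * d l) = fun _ => (1:ℝ) := by
      funext l; by_cases hl : l = j <;> simp [hd, hl]
    rw [this, Matrix.diagonal_one]
  have hg : Measurable fun M : Matrix (Fin n) (Fin n) ℝ => (M i k)^a * (M j k)^b :=
    ((meas_entry i k).pow_const a).mul ((meas_entry j k).pow_const b)
  have key := integral_left h hD hg
  have hptw : (fun M : Matrix (Fin n) (Fin n) ℝ =>
      ((Matrix.diagonal d * M) i k)^a * ((Matrix.diagonal d * M) j k)^b)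
      = fun M => -((M i k)^a * (M j k)^b) := by
    funext M
    rw [Matrix.diagonal_mul, Matrix.diagonal_mul]
    have hdi : d i = 1 := by simp [hd, hij]
    have hdj : d j = -1 := by simp [hd]
    rw [hdi, hdj, one_mul]
    rw [show (-1 : ℝ) * M j k = -(M j k) by ring, hb.neg_pow]
    ring
  rw [hptw] at key
  rw [integral_neg] at key
  linarith


noncomputable def rotMat (p q : Fin n) : Matrix (Fin n) (Fin n) ℝ :=
  fun i j =>
    if i = p then (if j = p then Real.sqrt 2⁻¹ else if j = q then Real.sqrt 2⁻¹ else 0)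
    else if i = q then (if j = p then -Real.sqrt 2⁻¹ else if j = q then Real.sqrt 2⁻¹ else 0)
    else if j = i then 1 else 0

section Rot

variable {p q : Fin n}

lemma rotMat_pp : rotMat p q p p = Real.sqrt 2⁻¹ := by simp [rotMat]
lemma rotMat_pq (hpq : p ≠ q) : rotMat p q p q = Real.sqrt 2⁻¹ := by
  simp [rotMat, Ne.symm hpq]
lemma rotMat_qp (hpq : p ≠ q) : rotMat p q q p = -Real.sqrt 2⁻¹ := by
  simp [rotMat, Ne.symm hpq]
lemma rotMat_qq (hpq : p ≠ q) : rotMat p q q q = Real.sqrt 2⁻¹ := by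
  simp [rotMat, Ne.symm hpq]

lemma rotMat_p_other {l : Fin n} (h1 : l ≠ p) (h2 : l ≠ q) : rotMat p q p l = 0 := by
  simp [rotMat, h1, h2]

lemma rotMat_q_other (hpq : p ≠ q) {l : Fin n} (h1 : l ≠ p) (h2 : l ≠ q) :
    rotMat p q q l = 0 := by
  simp [rotMat, Ne.symm hpq, h1, h2]

lemma rotMat_other {i l : Fin n} (h1 : i ≠ p) (h2 : i ≠ q) :
    rotMat p q i l = if l = i then 1 else 0 := by
  simp [rotMat, h1, h2]

lemma sum_pq (hpq : p ≠ q) (f : Fin n → ℝ) (hf : ∀ l, l ≠ p → l ≠ q → f l = 0) :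
    ∑ l, f l = f p + f q := by
  rw [← Finset.sum_pair hpq]
  refine (Finset.sum_subset (Finset.subset_univ _) ?_).symm
  intro x _ hx
  simp only [Finset.mem_insert, Finset.mem_singleton] at hx
  push_neg at hx
  exact hf x hx.1 hx.2

lemma rot_orth (hpq : p ≠ q) : rotMat p q * (rotMat p q)ᵀ = 1 := by
  have hc : Real.sqrt 2⁻¹ * Real.sqrt 2⁻¹ = 2⁻¹ := Real.mul_self_sqrt (by norm_num)
  ext i j
  rw [Matrix.mul_apply, Matrix.one_apply]
  simp only [Matrix.transpose_apply]
  by_cases hip : i = p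
  · by_cases hjp : j = p
    · rw [hip, hjp, if_pos rfl]
      rw [sum_pq hpq _ (fun l h1 h2 => by rw [rotMat_p_other h1 h2, zero_mul])]
      rw [rotMat_pp, rotMat_pq hpq, hc]; norm_num
    · by_cases hjq : j = q
      · rw [hip, hjq, if_neg hpq]
        rw [sum_pq hpq _ (fun l h1 h2 => by rw [rotMat_p_other h1 h2, zero_mul])]
        rw [rotMat_pp, rotMat_pq hpq, rotMat_qp hpq, rotMat_qq hpq]; ring
      · rw [hip, if_neg (fun hh : p = j => hjp hh.symm)]
        apply Finset.sum_eq_zero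
        intro l _
        by_cases h1 : l = p
        · rw [h1, rotMat_other hjp hjq, if_neg (fun hh : p = j => hjp hh.symm), mul_zero]
        · by_cases h2 : l = q
          · rw [h2, rotMat_other hjp hjq, if_neg (fun hh : q = j => hjq hh.symm), mul_zero]
          · rw [rotMat_p_other h1 h2, zero_mul]
  · by_cases hiq : i = q
    · by_cases hjp : j = p
      · rw [hiq, hjp, if_neg (Ne.symm hpq)]
        rw [sum_pq hpq _ (fun l h1 h2 => by rw [rotMat_q_other hpq h1 h2, zero_mul])]
        rw [rotMat_pp, rotMat_pq hpq, rotMat_qp hpq, rotMat_qq hpq]; ring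
      · by_cases hjq : j = q
        · rw [hiq, hjq, if_pos rfl]
          rw [sum_pq hpq _ (fun l h1 h2 => by rw [rotMat_q_other hpq h1 h2, zero_mul])]
          rw [rotMat_qp hpq, rotMat_qq hpq]
          rw [neg_mul_neg, hc]; norm_num
        · rw [hiq, if_neg (fun hh : q = j => hjq hh.symm)]
          apply Finset.sum_eq_zero
          intro l _
          by_cases h1 : l = p
          · rw [h1, rotMat_other hjp hjq, if_neg (fun hh : p = j => hjp hh.symm), mul_zero]
          · by_cases h2 : l = q
            · rw [h2, rotMat_other hjp hjq, if_neg (fun hh : q = j => hjq hh.symm), mul_zero]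
            · rw [rotMat_q_other hpq h1 h2, zero_mul]
    · by_cases hjp : j = p
      · rw [hjp, if_neg hip]
        apply Finset.sum_eq_zero
        intro l _
        by_cases h1 : l = i
        · rw [h1, rotMat_p_other hip hiq, mul_zero]
        · rw [rotMat_other hip hiq, if_neg h1, zero_mul]
      · by_cases hjq : j = q
        · rw [hjq, if_neg hiq]
          apply Finset.sum_eq_zero
          intro l _
          by_cases h1 : l = i
          · rw [h1, rotMat_q_other hpq hip hiq, mul_zero]
          · rw [rotMat_other hip hiq, if_neg h1, zero_mul]
        · by_cases hij : i = j
          · rw [← hij, if_pos rfl]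
            rw [Finset.sum_eq_single i]
            · rw [rotMat_other hip hiq, if_pos rfl, mul_one]
            · intro b _ hb
              rw [rotMat_other hip hiq, if_neg hb, zero_mul]
            · intro hmem; exact absurd (Finset.mem_univ _) hmem
          · rw [if_neg hij]
            apply Finset.sum_eq_zero
            intro l _
            by_cases h1 : l = i
            · rw [h1, rotMat_other hjp hjq, if_neg hij, mul_zero]
            · rw [rotMat_other hip hiq, if_neg h1, zero_mul]

lemma rotMat_mul_p (hpq : p ≠ q) (M : Matrix (Fin n) (Fin n) ℝ) (k : Fin n) :
    (rotMat p q * M) p k = Real.sqrt 2⁻¹ * M p k + Real.sqrt 2⁻¹ * M q k := by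
  rw [Matrix.mul_apply]
  rw [sum_pq hpq _ (fun l h1 h2 => by rw [rotMat_p_other h1 h2, zero_mul])]
  rw [rotMat_pp, rotMat_pq hpq]

end Rot


lemma integrable_mono2 (h : IsHaarOrthogonal n μ) (k i j : Fin n) (a b : ℕ) :
    Integrable (fun M : Matrix (Fin n) (Fin n) ℝ => (M i k)^a * (M j k)^b) μ := by
  apply integrable_bdd h (((meas_entry i k).pow_const a).mul ((meas_entry j k).pow_const b))
    (c := 1)
  filter_upwards [ae_col h k] with M hM
  have hi : |M i k| ≤ 1 := by nlinarith [hM.2 i, abs_nonneg (M i k), sq_abs (M i k)]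
  have hj : |M j k| ≤ 1 := by nlinarith [hM.2 j, abs_nonneg (M j k), sq_abs (M j k)]
  show |(M i k)^a * (M j k)^b| ≤ 1
  rw [abs_mul, abs_pow, abs_pow]
  exact mul_le_one₀ (pow_le_one₀ (abs_nonneg _) hi) (pow_nonneg (abs_nonneg _) b)
    (pow_le_one₀ (abs_nonneg _) hj)

lemma integrable_mono1 (h : IsHaarOrthogonal n μ) (k i : Fin n) (a : ℕ) :
    Integrable (fun M : Matrix (Fin n) (Fin n) ℝ => (M i k)^a) μ := by
  apply integrable_bdd h ((meas_entry i k).pow_const a) (c := 1)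
  filter_upwards [ae_col h k] with M hM
  have hi : |M i k| ≤ 1 := by nlinarith [hM.2 i, abs_nonneg (M i k), sq_abs (M i k)]
  rw [abs_pow]
  exact pow_le_one₀ (abs_nonneg _) hi

lemma second_moment (h : IsHaarOrthogonal n μ) (k : Fin n) (hn : 0 < n) (i : Fin n) :
    ∫ M, (M i k)^2 ∂μ = 1/(n:ℝ) := by
  haveI := h.isProb
  have hsum : ∑ i', ∫ M, (M i' k)^2 ∂μ = 1 := by
    rw [← integral_finset_sum _ (fun i' _ => integrable_mono1 h k i' 2)]
    rw [integral_congr_ae (g := fun _ => (1:ℝ))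
      (by filter_upwards [ae_col h k] with M hM using hM.1)]
    simp
  rw [Finset.sum_congr rfl (fun i' _ => integral_sq_eq h k i' i), Finset.sum_const,
    Finset.card_univ, Fintype.card_fin, nsmul_eq_mul] at hsum
  have hn' : (n:ℝ) ≠ 0 := Nat.cast_ne_zero.mpr hn.ne'
  field_simp
  linarith

lemma moments4 (h : IsHaarOrthogonal n μ) (k : Fin n) (hn : 0 < n) :
    (∀ i, ∫ M, (M i k)^4 ∂μ = 3/((n:ℝ)*((n:ℝ)+2))) ∧
    (∀ i j, i ≠ j → ∫ M, (M i k)^2 * (M j k)^2 ∂μ = 1/((n:ℝ)*((n:ℝ)+2))) := by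
  haveI := h.isProb
  rcases Nat.lt_or_ge n 2 with h2 | h2
  · have hn1 : n = 1 := by omega
    subst hn1
    constructor
    · intro i
      have hae : (fun M : Matrix (Fin 1) (Fin 1) ℝ => (M i k)^4) =ᵐ[μ] fun _ => (1:ℝ) := by
        filter_upwards [ae_col h k] with M hM
        have h1 : (M i k)^2 = 1 := by
          have := hM.1
          have hi0 : i = 0 := Subsingleton.elim i 0
          rw [hi0]
          simpa using this
        calc (M i k)^4 = ((M i k)^2)^2 := by ring
          _ = 1 := by rw [h1]; norm_num
      rw [integral_congr_ae hae]
      simp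
      norm_num
    · intro i j hij
      exact absurd (Subsingleton.elim i j) hij
  · set p : Fin n := ⟨0, by omega⟩ with hp
    set q : Fin n := ⟨1, by omega⟩ with hq
    have hpq : p ≠ q := by simp [hp, hq, Fin.ext_iff]
    set α := ∫ M, (M p k)^4 ∂μ with hα
    set β := ∫ M, (M p k)^2 * (M q k)^2 ∂μ with hβ
    have hsym4 : ∀ i, ∫ M, (M i k)^4 ∂μ = α := fun i => integral_pow4_eq h k i p
    have hsymp : ∀ i j, i ≠ j → ∫ M, (M i k)^2 * (M j k)^2 ∂μ = β := fun i j hij =>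
      integral_pair_eq h k hij hpq
    have hc : Real.sqrt 2⁻¹ * Real.sqrt 2⁻¹ = 2⁻¹ := Real.mul_self_sqrt (by norm_num)
    have hc4 : (Real.sqrt 2⁻¹)^4 = 1/4 := by
      have : (Real.sqrt 2⁻¹)^4 = (Real.sqrt 2⁻¹ * Real.sqrt 2⁻¹)^2 := by ring
      rw [this, hc]; norm_num
    -- rotation identity
    have hrot := integral_left h (rot_orth hpq) (g := fun M => (M p k)^4)
      ((meas_entry p k).pow_const 4)
    have hptw : (fun M : Matrix (Fin n) (Fin n) ℝ => ((rotMat p q * M) p k)^4)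
        = fun M => (1/4)*(M p k)^4 + (M p k)^3*(M q k)^1 + (3/2)*((M p k)^2*(M q k)^2)
            + (M p k)^1*(M q k)^3 + (1/4)*(M q k)^4 := by
      funext M
      rw [rotMat_mul_p hpq]
      have : (Real.sqrt 2⁻¹ * M p k + Real.sqrt 2⁻¹ * M q k)^4
          = (Real.sqrt 2⁻¹)^4 * (M p k + M q k)^4 := by ring
      rw [this, hc4]
      ring
    rw [hptw] at hrot
    have I1 : Integrable (fun M : Matrix (Fin n) (Fin n) ℝ => (1/4)*(M p k)^4) μ :=
      (integrable_mono1 h k p 4).const_mul _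
    have I2 := integrable_mono2 h k p q 3 1
    have I3 : Integrable (fun M : Matrix (Fin n) (Fin n) ℝ => (3/2)*((M p k)^2*(M q k)^2)) μ :=
      (integrable_mono2 h k p q 2 2).const_mul _
    have I4 := integrable_mono2 h k p q 1 3
    have I5 : Integrable (fun M : Matrix (Fin n) (Fin n) ℝ => (1/4)*(M q k)^4) μ :=
      (integrable_mono1 h k q 4).const_mul _
    have J2 : Integrable (fun M : Matrix (Fin n) (Fin n) ℝ =>
        (1/4)*(M p k)^4 + (M p k)^3*(M q k)^1) μ := I1.add I2
    have J3 : Integrable (fun M : Matrix (Fin n) (Fin n) ℝ =>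
        (1/4)*(M p k)^4 + (M p k)^3*(M q k)^1 + (3/2)*((M p k)^2*(M q k)^2)) μ := J2.add I3
    have J4 : Integrable (fun M : Matrix (Fin n) (Fin n) ℝ =>
        (1/4)*(M p k)^4 + (M p k)^3*(M q k)^1 + (3/2)*((M p k)^2*(M q k)^2)
          + (M p k)^1*(M q k)^3) μ := J3.add I4
    rw [integral_add J4 I5, integral_add J3 I4, integral_add J2 I3, integral_add I1 I2] at hrot
    rw [integral_const_mul, integral_const_mul, integral_const_mul,
        integral_odd_zero h k hpq 3 1 (by decide),
        integral_odd_zero h k hpq 1 3 (by decide),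
        hsym4 q] at hrot
    have hα3 : α = 3*β := by
      have : (1/4)*α + 0 + (3/2)*β + 0 + (1/4)*α = α := hrot
      linarith
    -- total sum identity
    have hone : ∫ M, (∑ i, (M i k)^2)^2 ∂μ = 1 := by
      rw [integral_congr_ae (g := fun _ => (1:ℝ))
        (by filter_upwards [ae_col h k] with M hM; rw [hM.1]; norm_num)]
      simp
    have hsq : (fun M : Matrix (Fin n) (Fin n) ℝ => (∑ i, (M i k)^2)^2)
        = fun M => ∑ i, ∑ j, (M i k)^2 * (M j k)^2 := by
      funext M
      rw [sq, Finset.sum_mul_sum]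
    rw [hsq] at hone
    rw [integral_finset_sum _ (fun i _ =>
      integrable_finset_sum _ (fun j _ => integrable_mono2 h k i j 2 2))] at hone
    have hinner : ∀ i : Fin n, (∫ M, ∑ j, (M i k)^2 * (M j k)^2 ∂μ) = α + ((n:ℝ)-1)*β := by
      intro i
      rw [integral_finset_sum _ (fun j _ => integrable_mono2 h k i j 2 2)]
      rw [← Finset.add_sum_erase _ _ (Finset.mem_univ i)]
      have hii : ∫ M, (M i k)^2 * (M i k)^2 ∂μ = α := by
        rw [show (fun M : Matrix (Fin n) (Fin n) ℝ => (M i k)^2 * (M i k)^2)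
          = fun M => (M i k)^4 from funext fun M => by ring]
        exact hsym4 i
      rw [hii]
      congr 1
      rw [Finset.sum_congr rfl (fun j hj => hsymp i j (Finset.ne_of_mem_erase hj).symm)]
      rw [Finset.sum_const, Finset.card_erase_of_mem (Finset.mem_univ i),
        Finset.card_univ, Fintype.card_fin, nsmul_eq_mul]
      congr 1
      rw [Nat.cast_sub hn, Nat.cast_one]
    rw [Finset.sum_congr rfl (fun i _ => hinner i), Finset.sum_const, Finset.card_univ,
      Fintype.card_fin, nsmul_eq_mul] at hone
    have hn0 : (0:ℝ) < n := Nat.cast_pos.mpr hn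
    have key : β * ((n:ℝ)*((n:ℝ)+2)) = 1 := by linear_combination hone - (n:ℝ)*hα3
    have hne : (n:ℝ)*((n:ℝ)+2) ≠ 0 := by positivity
    have hβval : β = 1/((n:ℝ)*((n:ℝ)+2)) := by
      field_simp
      linarith [key]
    constructor
    · intro i
      rw [hsym4 i, hα3, hβval]
      ring
    · intro i j hij
      rw [hsymp i j hij, hβval]


lemma main_bound (h : IsHaarOrthogonal n μ) (k : Fin n) (hn : 0 < n) (a : Fin n → ℝ)
    (ha : ∑ i, (a i)^2 ≤ (n:ℝ)) :
    ∫ M, (∑ i, a i * ((M i k)^2 - 1/(n:ℝ)))^2 ∂μ ≤ 2/(n:ℝ) := by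
  haveI := h.isProb
  obtain ⟨h4, hcross⟩ := moments4 h k hn
  have h2 := second_moment h k hn
  have hn0 : (0:ℝ) < n := Nat.cast_pos.mpr hn
  have hn1 : 1/(n:ℝ) ≤ 1 := by
    rw [div_le_one hn0]
    exact_mod_cast hn
  set F : Fin n → Matrix (Fin n) (Fin n) ℝ → ℝ :=
    fun i M => a i * ((M i k)^2 - 1/(n:ℝ)) with hF
  have measF : ∀ i, Measurable (F i) := fun i =>
    (((meas_entry i k).pow_const 2).sub measurable_const).const_mul _
  have IFF : ∀ i j, Integrable (fun M => F i M * F j M) μ := by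
    intro i j
    apply integrable_bdd h ((measF i).mul (measF j)) (c := (|a i| * 2) * (|a j| * 2))
    filter_upwards [ae_col h k] with M hM
    have hbd : ∀ l, |F l M| ≤ |a l| * 2 := by
      intro l
      rw [hF, abs_mul]
      apply mul_le_mul_of_nonneg_left _ (abs_nonneg _)
      rw [abs_le]
      constructor
      · nlinarith [sq_nonneg (M l k), hn1, one_div_pos.mpr hn0]
      · nlinarith [hM.2 l, hn1, one_div_pos.mpr hn0]
    show |F i M * F j M| ≤ _
    rw [abs_mul]
    exact mul_le_mul (hbd i) (hbd j) (abs_nonneg _)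
      (mul_nonneg (abs_nonneg _) (by norm_num))
  have hpair : ∀ i j : Fin n, ∫ M, F i M * F j M ∂μ
      = a i * a j * ((∫ M, (M i k)^2*(M j k)^2 ∂μ) - 1/(n:ℝ)^2) := by
    intro i j
    have hptw : (fun M => F i M * F j M)
        = fun M : Matrix (Fin n) (Fin n) ℝ =>
            (a i * a j) * ((M i k)^2*(M j k)^2)
            - (a i * a j * (1/(n:ℝ))) * (M i k)^2
            - (a i * a j * (1/(n:ℝ))) * (M j k)^2
            + (a i * a j * (1/(n:ℝ)^2)) := by
      funext M; simp only [hF]; ring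
    rw [hptw]
    have Ia : Integrable (fun M : Matrix (Fin n) (Fin n) ℝ =>
        (a i * a j) * ((M i k)^2*(M j k)^2)) μ := (integrable_mono2 h k i j 2 2).const_mul _
    have Ib : Integrable (fun M : Matrix (Fin n) (Fin n) ℝ =>
        (a i * a j * (1/(n:ℝ))) * (M i k)^2) μ := (integrable_mono1 h k i 2).const_mul _
    have Ic : Integrable (fun M : Matrix (Fin n) (Fin n) ℝ =>
        (a i * a j * (1/(n:ℝ))) * (M j k)^2) μ := (integrable_mono1 h k j 2).const_mul _
    have Iab : Integrable (fun M : Matrix (Fin n) (Fin n) ℝ =>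
        (a i * a j) * ((M i k)^2*(M j k)^2) - (a i * a j * (1/(n:ℝ))) * (M i k)^2) μ :=
      Ia.sub Ib
    have Iabc : Integrable (fun M : Matrix (Fin n) (Fin n) ℝ =>
        (a i * a j) * ((M i k)^2*(M j k)^2) - (a i * a j * (1/(n:ℝ))) * (M i k)^2
          - (a i * a j * (1/(n:ℝ))) * (M j k)^2) μ := Iab.sub Ic
    rw [integral_add Iabc (integrable_const _), integral_sub Iab Ic, integral_sub Ia Ib,
      integral_const_mul, integral_const_mul, integral_const_mul, h2 i, h2 j, integral_const]
    simp only [measure_univ, ENNReal.toReal_one, one_smul, probReal_univ]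
    field_simp
    ring
  set m : ℝ := 1/((n:ℝ)*((n:ℝ)+2)) with hm
  have hterm : ∀ i j : Fin n, ∫ M, F i M * F j M ∂μ
      = a i * a j * (m - 1/(n:ℝ)^2) + (if i = j then (a i * a j) * (2*m) else 0) := by
    intro i j
    by_cases hij : i = j
    · subst hij
      rw [hpair i i, if_pos rfl]
      have : (fun M : Matrix (Fin n) (Fin n) ℝ => (M i k)^2*(M i k)^2)
          = fun M => (M i k)^4 := funext fun M => by ring
      rw [this, h4 i]
      rw [hm]; ring
    · rw [hpair i j, hcross i j hij, if_neg hij]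
      rw [hm]; ring
  have key : ∫ M, (∑ i, F i M)^2 ∂μ = ∑ i, ∑ j, ∫ M, F i M * F j M ∂μ := by
    have hsq : (fun M : Matrix (Fin n) (Fin n) ℝ => (∑ i, F i M)^2)
        = fun M => ∑ i, ∑ j, F i M * F j M := funext fun M => by
      rw [sq, Finset.sum_mul_sum]
    rw [hsq, integral_finset_sum _ (fun i _ => integrable_finset_sum _ (fun j _ => IFF i j))]
    exact Finset.sum_congr rfl fun i _ => integral_finset_sum _ (fun j _ => IFF i j)
  have hsum : ∑ i, ∑ j, ∫ M, F i M * F j M ∂μ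
      = (∑ i, a i) * (∑ i, a i) * (m - 1/(n:ℝ)^2) + (∑ i, (a i)^2) * (2*m) := by
    rw [Finset.sum_congr rfl (fun i _ => Finset.sum_congr rfl (fun j _ => hterm i j))]
    rw [Finset.sum_congr rfl (fun i (_ : i ∈ Finset.univ) => Finset.sum_add_distrib)]
    rw [Finset.sum_add_distrib]
    congr 1
    · rw [Finset.sum_mul_sum, Finset.sum_mul]
      refine Finset.sum_congr rfl fun i _ => ?_
      rw [Finset.sum_mul]
    · rw [Finset.sum_mul]
      refine Finset.sum_congr rfl fun i _ => ?_
      rw [Finset.sum_ite_eq Finset.univ i (fun j => a i * a j * (2*m))]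
      simp [sq]
  rw [key, hsum]
  have hT2 : 0 ≤ (∑ i, a i) * (∑ i, a i) := mul_self_nonneg _
  have hmpos : 0 < m := by rw [hm]; positivity
  have hC : m - 1/(n:ℝ)^2 ≤ 0 := by
    rw [hm, sub_nonpos]
    apply one_div_le_one_div_of_le (by positivity)
    nlinarith
  have hS : 0 ≤ ∑ i, (a i)^2 := Finset.sum_nonneg fun i _ => sq_nonneg _
  calc (∑ i, a i) * (∑ i, a i) * (m - 1/(n:ℝ)^2) + (∑ i, (a i)^2) * (2*m)
      ≤ 0 + (∑ i, (a i)^2) * (2*m) := by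
        have := mul_nonpos_of_nonneg_of_nonpos hT2 hC
        linarith
    _ ≤ (n:ℝ) * (2*m) := by
        rw [zero_add]
        exact mul_le_mul_of_nonneg_right ha (by positivity)
    _ ≤ 2/(n:ℝ) := by
        rw [hm]
        have h1 : (n:ℝ)*(2*(1/((n:ℝ)*((n:ℝ)+2)))) = 2/((n:ℝ)+2) := by field_simp
        rw [h1, div_le_div_iff₀ (by positivity) hn0]
        nlinarith


lemma diag_sq_le (B : Matrix (Fin n) (Fin n) ℝ) (hB : Matrix.trace (B * Bᵀ) = (n:ℝ)) :
    ∑ i, (B i i)^2 ≤ (n:ℝ) := by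
  have ht : Matrix.trace (B * Bᵀ) = ∑ i, ∑ j, (B i j)^2 := by
    simp [Matrix.trace, Matrix.diag, Matrix.mul_apply, Matrix.transpose_apply, sq]
  rw [ht] at hB
  rw [← hB]
  apply Finset.sum_le_sum
  intro i _
  exact Finset.single_le_sum (f := fun j => (B i j)^2) (fun j _ => sq_nonneg _)
    (Finset.mem_univ i)

end Stmt16

/-- with `Tr(A_n A_nᵀ) = n` and `∑_i A_{ii}/n → s`,
`V_n = ∑_i A_{ii} M_{i,k}²` converges to `s` in `L²`, and more precisely
`E[(∑_i A_{ii}(M_{i,k}² − 1/n))²] = O(1/n)`. -/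
theorem stmt16 (A : ∀ n : ℕ, Matrix (Fin n) (Fin n) ℝ)
    (hA : ∀ n, Matrix.trace (A n * (A n)ᵀ) = (n : ℝ))
    (s : ℝ)
    (hs : Filter.Tendsto (fun n => (∑ i, A n i i) / (n : ℝ)) Filter.atTop (nhds s))
    (μ : ∀ n : ℕ, Measure (Matrix (Fin n) (Fin n) ℝ))
    (hμ : ∀ n, IsHaarOrthogonal n (μ n)) :
    (∃ C : ℝ, ∀ n : ℕ, ∀ k : Fin n,
      ∫ M, (∑ i, A n i i * ((M i k) ^ 2 - 1 / n)) ^ 2 ∂(μ n) ≤ C / n) ∧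
    (∀ k : ∀ n : ℕ, Fin (n + 1),
      Filter.Tendsto
        (fun n => ∫ M, (∑ i, A (n + 1) i i * (M i (k n)) ^ 2 - s) ^ 2 ∂(μ (n + 1)))
        Filter.atTop (nhds 0)) := by
  constructor
  · refine ⟨2, fun n k => ?_⟩
    exact Stmt16.main_bound (hμ n) k k.pos (fun i => A n i i)
      (Stmt16.diag_sq_le (A n) (hA n))
  · intro k
    apply squeeze_zero
      (g := fun n : ℕ => 4/(((n+1:ℕ)):ℝ) + 2*((∑ i, A (n+1) i i)/(((n+1:ℕ)):ℝ) - s)^2)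
    · intro n
      exact integral_nonneg fun M => sq_nonneg _
    · intro n
      set m : ℕ := n + 1 with hmdef
      haveI := (hμ m).isProb
      have hm0 : 0 < m := Nat.succ_pos n
      have hmR : (0:ℝ) < (m:ℝ) := Nat.cast_pos.mpr hm0
      have hm1 : 1/(m:ℝ) ≤ 1 := by
        rw [div_le_one hmR]
        exact_mod_cast hm0
      set a : Fin m → ℝ := fun i => A m i i with hadef
      set f : Matrix (Fin m) (Fin m) ℝ → ℝ :=
        fun M => ∑ i, a i * ((M i (k n))^2 - 1/(m:ℝ)) with hfdef
      set c : ℝ := (∑ i, a i)/(m:ℝ) - s with hcdef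
      have hptw : ∀ M : Matrix (Fin m) (Fin m) ℝ,
          (∑ i, a i * (M i (k n))^2 - s) = f M + c := by
        intro M
        rw [hfdef, hcdef]
        have : ∑ i, a i * ((M i (k n))^2 - 1/(m:ℝ))
            = ∑ i, a i * (M i (k n))^2 - (∑ i, a i)/(m:ℝ) := by
          rw [Finset.sum_div, ← Finset.sum_sub_distrib]
          exact Finset.sum_congr rfl fun i _ => by ring
        beta_reduce
        rw [this]
        ring
      have measf : Measurable f := by
        rw [hfdef]
        exact Finset.measurable_sum _ fun i _ =>
          (((Stmt16.meas_entry i (k n)).pow_const 2).sub measurable_const).const_mul _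
      have hfb : ∀ᵐ M ∂(μ m), |f M| ≤ ∑ i, |a i| * 2 := by
        filter_upwards [Stmt16.ae_col (hμ m) (k n)] with M hM
        calc |f M| ≤ ∑ i, |a i * ((M i (k n))^2 - 1/(m:ℝ))| :=
              Finset.abs_sum_le_sum_abs _ _
          _ ≤ ∑ i, |a i| * 2 := by
              apply Finset.sum_le_sum
              intro i _
              rw [abs_mul]
              apply mul_le_mul_of_nonneg_left _ (abs_nonneg _)
              rw [abs_le]
              constructor
              · nlinarith [sq_nonneg (M i (k n)), hm1, one_div_pos.mpr hmR]
              · nlinarith [hM.2 i, hm1, one_div_pos.mpr hmR]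
      have If2 : Integrable (fun M => (f M)^2) (μ m) := by
        apply Stmt16.integrable_bdd (hμ m) (measf.pow_const 2)
          (c := (∑ i, |a i| * 2)^2)
        filter_upwards [hfb] with M hM
        rw [abs_pow]
        exact pow_le_pow_left₀ (abs_nonneg _) hM 2
      have I1 : Integrable (fun M => (f M + c)^2) (μ m) := by
        apply Stmt16.integrable_bdd (hμ m) ((measf.add_const c).pow_const 2)
          (c := ((∑ i, |a i| * 2) + |c|)^2)
        filter_upwards [hfb] with M hM
        rw [abs_pow]
        apply pow_le_pow_left₀ (abs_nonneg _) _ 2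
        exact (abs_add_le _ _).trans (add_le_add_left hM _)
      have I2 : Integrable (fun M => 2*(f M)^2 + 2*c^2) (μ m) :=
        (If2.const_mul 2).add (integrable_const _)
      calc ∫ M, (∑ i, A m i i * (M i (k n))^2 - s)^2 ∂(μ m)
          = ∫ M, (f M + c)^2 ∂(μ m) := by
            congr 1
            funext M
            rw [← hptw M]
        _ ≤ ∫ M, 2*(f M)^2 + 2*c^2 ∂(μ m) :=
            integral_mono I1 I2 (fun M => by nlinarith [sq_nonneg (f M - c)])
        _ = 2*(∫ M, (f M)^2 ∂(μ m)) + 2*c^2 := by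
            rw [integral_add (If2.const_mul 2) (integrable_const _), integral_const_mul,
              integral_const]
            simp [measure_univ]
        _ ≤ 2*(2/(m:ℝ)) + 2*c^2 := by
            have hb := Stmt16.main_bound (hμ m) (k n) hm0 a
              (Stmt16.diag_sq_le (A m) (hA m))
            have : ∫ M, (f M)^2 ∂(μ m) ≤ 2/(m:ℝ) := hb
            linarith
        _ = 4/(m:ℝ) + 2*((∑ i, a i)/(m:ℝ) - s)^2 := by
            rw [hcdef]
            ring
    · have t1 : Filter.Tendsto (fun n : ℕ => 4/(((n+1:ℕ)):ℝ)) Filter.atTop (nhds 0) :=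
        (Filter.tendsto_add_atTop_iff_nat 1).mpr (tendsto_const_div_atTop_nhds_zero_nat 4)
      have t2 : Filter.Tendsto (fun n : ℕ => (∑ i, A (n+1) i i)/(((n+1:ℕ)):ℝ))
          Filter.atTop (nhds s) := (Filter.tendsto_add_atTop_iff_nat 1).mpr hs
      have t3 : Filter.Tendsto
          (fun n : ℕ => 2*((∑ i, A (n+1) i i)/(((n+1:ℕ)):ℝ) - s)^2)
          Filter.atTop (nhds 0) := by
        have h4 := t2.sub (tendsto_const_nhds (x := s))
        have h5 := (h4.pow 2).const_mul 2
        simpa using h5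
      simpa using t1.add t3
end
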